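/- Let p ≡ q ≡ 1 (mod 4) be distinct primes with (p/q) = 1, and suppose e, f, g are integers with e² = p·f² + q·g². Then (p/q)₄·(q/p)₄ = (−1)^(fg/2)·((−1)/e), under the normalization that one may swap p and q so that if p ≡ q ≡ 5 (mod 8) then f is even and g is odd, and if p ≢ q (mod 8) then p ≡ 5 and q ≡ 1 (mod 8). -/

import Mathlib

/-- The rational quartic residue symbol `(m/p)₄ = m^((p−1)/4) mod p`, recorded as an
integer: it is `1` or `−1` when `m^((p−1)/4) = ±1` in `ZMod p`, and `0` otherwise. -/
def quarticSym (p : ℕ) (m : ℤ) : ℤ :=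
  if (m : ZMod p) ^ ((p - 1) / 4) = 1 then 1
  else if (m : ZMod p) ^ ((p - 1) / 4) = -1 then -1 else 0


-- helper: odd squares are 1 mod 8 (with explicit witness)
lemma qrp_oddsq {a : ℕ} (ha : Odd a) : ∃ u, a ^ 2 = 8 * u + 1 := by
  obtain ⟨t, rfl⟩ := ha
  obtain ⟨s, hs⟩ := Nat.even_mul_succ_self t
  refine ⟨s, ?_⟩
  have h1 : t * (t + 1) = 2 * s := by omega
  have h2 : (2 * t + 1) ^ 2 = 4 * (t * (t + 1)) + 1 := by ring
  omega

-- helper: q does not divide a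
lemma qrp_not_dvd {p q a b c : ℕ} (pp : p.Prime) (qp : q.Prime) (hne : p ≠ q)
    (h : a ^ 2 = p * b ^ 2 + q * c ^ 2) (hg : Nat.gcd a (Nat.gcd b c) = 1) :
    ¬ q ∣ a := by
  intro hqa
  have hqa2 : q ∣ a ^ 2 := dvd_pow hqa two_ne_zero
  have h1 : q ∣ p * b ^ 2 := by
    rw [h, add_comm] at hqa2
    exact (Nat.dvd_add_right (dvd_mul_right q _)).mp hqa2
  have hqb : q ∣ b := by
    rcases (Nat.Prime.dvd_mul qp).mp h1 with h2 | h2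
    · exact absurd ((Nat.prime_dvd_prime_iff_eq qp pp).mp h2).symm hne
    · exact qp.dvd_of_dvd_pow h2
  have h3 : q ^ 2 ∣ a ^ 2 - p * b ^ 2 :=
    Nat.dvd_sub (pow_dvd_pow_of_dvd hqa 2)
      (Dvd.dvd.mul_left (pow_dvd_pow_of_dvd hqb 2) p)
  have h4 : a ^ 2 - p * b ^ 2 = q * c ^ 2 := by omega
  rw [h4, pow_two] at h3
  have h5 : q ∣ c ^ 2 := (mul_dvd_mul_iff_left (Nat.Prime.ne_zero qp)).mp h3
  have hqc : q ∣ c := qp.dvd_of_dvd_pow h5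
  have h6 : q ∣ 1 := hg ▸ Nat.dvd_gcd hqa (Nat.dvd_gcd hqb hqc)
  exact Nat.Prime.one_lt qp |>.ne' (Nat.dvd_one.mp h6)

-- helper: a and b are coprime
lemma qrp_cop_ab {p q a b c : ℕ} (pp : p.Prime) (qp : q.Prime) (hne : p ≠ q)
    (h : a ^ 2 = p * b ^ 2 + q * c ^ 2) (hg : Nat.gcd a (Nat.gcd b c) = 1) :
    Nat.Coprime a b := by
  by_contra hcop
  obtain ⟨r, rp, ra, rb⟩ := Nat.Prime.not_coprime_iff_dvd.mp hcop
  have h1 : r ∣ q * c ^ 2 := by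
    have h2 : r ∣ a ^ 2 - p * b ^ 2 :=
      Nat.dvd_sub (dvd_pow ra two_ne_zero) (Dvd.dvd.mul_left (dvd_pow rb two_ne_zero) p)
    have h3 : a ^ 2 - p * b ^ 2 = q * c ^ 2 := by omega
    rwa [h3] at h2
  rcases (Nat.Prime.dvd_mul rp).mp h1 with h2 | h2
  · have : r = q := (Nat.prime_dvd_prime_iff_eq rp qp).mp h2
    subst this
    exact qrp_not_dvd pp qp hne h hg ra
  · have rc : r ∣ c := rp.dvd_of_dvd_pow h2
    have h6 : r ∣ 1 := hg ▸ Nat.dvd_gcd ra (Nat.dvd_gcd rb rc)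
    exact rp.one_lt.ne' (Nat.dvd_one.mp h6)

-- helper: b and c are coprime
lemma qrp_cop_bc {p q a b c : ℕ} (h : a ^ 2 = p * b ^ 2 + q * c ^ 2)
    (hg : Nat.gcd a (Nat.gcd b c) = 1) : Nat.Coprime b c := by
  by_contra hcop
  obtain ⟨r, rp, rb, rc⟩ := Nat.Prime.not_coprime_iff_dvd.mp hcop
  have h1 : r ∣ a ^ 2 := by
    rw [h]
    exact dvd_add (Dvd.dvd.mul_left (dvd_pow rb two_ne_zero) p)
      (Dvd.dvd.mul_left (dvd_pow rc two_ne_zero) q)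
  have ra : r ∣ a := rp.dvd_of_dvd_pow h1
  have h6 : r ∣ 1 := hg ▸ Nat.dvd_gcd ra (Nat.dvd_gcd rb rc)
  exact rp.one_lt.ne' (Nat.dvd_one.mp h6)

-- computing the quartic symbol as a Legendre symbol
lemma qrp_quartic_eq (q : ℕ) [hq : Fact q.Prime] (hq4 : q % 4 = 1) (m : ℤ) (x y : ℕ)
    (hx : ¬ q ∣ x) (hy : ¬ q ∣ y)
    (hm : (m : ZMod q) * (y : ZMod q) ^ 2 = (x : ZMod q) ^ 2) :
    quarticSym q m = legendreSym q ((x : ℤ) * y) := by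
  have hq2 : 2 ≤ q := hq.out.two_le
  have hq5 : 5 ≤ q := by omega
  obtain ⟨t, ht⟩ : ∃ t, q = 4 * t + 1 := ⟨q / 4, by omega⟩
  have h14 : (q - 1) / 4 = t := by omega
  have h2 : q / 2 = 2 * t := by omega
  have hxz : (x : ZMod q) ≠ 0 := by
    rw [Ne, ZMod.natCast_eq_zero_iff]; exact hx
  have hyz : (y : ZMod q) ≠ 0 := by
    rw [Ne, ZMod.natCast_eq_zero_iff]; exact hy
  have key : (m : ZMod q) ^ t * ((y : ZMod q)) ^ (2 * t) = ((x : ZMod q)) ^ (2 * t) := by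
    rw [pow_mul, pow_mul, ← mul_pow, hm]
  have hLx : ((x : ZMod q)) ^ (2 * t) = ((legendreSym q (x : ℤ) : ℤ) : ZMod q) := by
    rw [legendreSym.eq_pow, h2]; push_cast; ring
  have hLy : ((y : ZMod q)) ^ (2 * t) = ((legendreSym q (y : ℤ) : ℤ) : ZMod q) := by
    rw [legendreSym.eq_pow, h2]; push_cast; ring
  have hLy1 : legendreSym q (y : ℤ) = 1 ∨ legendreSym q (y : ℤ) = -1 :=
    legendreSym.eq_one_or_neg_one q (by push_cast; exact hyz)
  have hLL : legendreSym q ((x : ℤ) * y) = legendreSym q (x : ℤ) * legendreSym q (y : ℤ) :=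
    legendreSym.mul q _ _
  have hmt : (m : ZMod q) ^ t = ((legendreSym q ((x : ℤ) * y) : ℤ) : ZMod q) := by
    have hy2 : ((legendreSym q (y : ℤ) : ℤ) : ZMod q) * ((legendreSym q (y : ℤ) : ℤ) : ZMod q) = 1 := by
      rcases hLy1 with h | h <;> rw [h] <;> push_cast <;> ring
    have := congrArg (· * ((legendreSym q (y : ℤ) : ℤ) : ZMod q)) key
    try simp only at this
    rw [hLy, hLx, mul_assoc, hy2, mul_one] at this
    rw [this, hLL]
    push_cast; ring
  have hL : legendreSym q ((x : ℤ) * y) = 1 ∨ legendreSym q ((x : ℤ) * y) = -1 :=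
    legendreSym.eq_one_or_neg_one q (by push_cast; exact mul_ne_zero hxz hyz)
  have hne1 : (-1 : ZMod q) ≠ 1 := by
    haveI : Fact (2 < q) := ⟨by omega⟩
    exact ZMod.neg_one_ne_one
  rcases hL with hL | hL <;>
    simp only [quarticSym, h14, hmt, hL] <;> norm_num
  exact hne1

-- J(a|q) * J(a|p) = J(-1|a)
lemma qrp_step3 (p q a b c : ℕ) [pp : Fact p.Prime] [qp : Fact q.Prime]
    (hp4 : p % 4 = 1) (hq4 : q % 4 = 1)
    (h : a ^ 2 = p * b ^ 2 + q * c ^ 2) (ha : Odd a)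
    (hab : Nat.Coprime a b) (hac : Nat.Coprime a c) (hqa : ¬ q ∣ a) :
    jacobiSym (a : ℤ) q * jacobiSym (a : ℤ) p = jacobiSym (-1) a := by
  have hZ : ((a : ℤ)) ^ 2 = (p : ℤ) * (b : ℤ) ^ 2 + (q : ℤ) * (c : ℤ) ^ 2 := by
    exact_mod_cast congrArg (Nat.cast : ℕ → ℤ) h
  have hgbc : Int.gcd ((b : ℤ) * (c : ℤ)) a = 1 := by
    simpa [Int.gcd, Int.natAbs_mul] using (hab.symm.mul hac.symm)
  have hgqc : Int.gcd ((q : ℤ) * (c : ℤ) ^ 2) a = 1 := by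
    have hq : Nat.Coprime q a := (Nat.Prime.coprime_iff_not_dvd qp.out).mpr hqa
    simpa [Int.gcd, Int.natAbs_mul, Int.natAbs_pow] using hq.mul (Nat.Coprime.pow_left 2 hac.symm)
  have hmod : ((q : ℤ) * p * ((b : ℤ) * c) ^ 2) % (a : ℤ) = (-(((q : ℤ) * (c : ℤ) ^ 2) ^ 2)) % (a : ℤ) := by
    have hdvd : (a : ℤ) ∣ (-(((q : ℤ) * (c : ℤ) ^ 2) ^ 2)) - ((q : ℤ) * p * ((b : ℤ) * c) ^ 2) := by
      refine ⟨-((q : ℤ) * (c : ℤ) ^ 2 * a), ?_⟩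
      linear_combination ((q : ℤ) * (c : ℤ) ^ 2) * hZ
    exact Int.modEq_iff_dvd.mpr hdvd
  calc jacobiSym (a : ℤ) q * jacobiSym (a : ℤ) p
      = jacobiSym (q : ℤ) a * jacobiSym (p : ℤ) a := by
        rw [jacobiSym.quadratic_reciprocity_one_mod_four hq4 ha,
          jacobiSym.quadratic_reciprocity_one_mod_four hp4 ha]
    _ = jacobiSym ((q : ℤ) * p) a := (jacobiSym.mul_left _ _ _).symm
    _ = jacobiSym ((q : ℤ) * p) a * jacobiSym (((b : ℤ) * c) ^ 2) a := by
        rw [jacobiSym.sq_one' hgbc, mul_one]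
    _ = jacobiSym ((q : ℤ) * p * ((b : ℤ) * c) ^ 2) a := (jacobiSym.mul_left _ _ _).symm
    _ = jacobiSym (-(((q : ℤ) * (c : ℤ) ^ 2) ^ 2)) a := jacobiSym.mod_left' hmod
    _ = jacobiSym (-1) a * jacobiSym (((q : ℤ) * (c : ℤ) ^ 2) ^ 2) a := by
        rw [← jacobiSym.mul_left]; ring_nf
    _ = jacobiSym (-1) a := by rw [jacobiSym.sq_one' hgqc, mul_one]

-- J(b|q) * J(c|p) = (-1)^(b*c/2), b even, c odd
lemma qrp_core (p q a b c : ℕ) [pp : Fact p.Prime] [qp : Fact q.Prime]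
    (hp4 : p % 4 = 1) (hq4 : q % 4 = 1)
    (h : a ^ 2 = p * b ^ 2 + q * c ^ 2) (ha : Odd a) (hb : Even b) (hc : Odd c)
    (hb0 : b ≠ 0) (hab : Nat.Coprime a b) (hac : Nat.Coprime a c) (hbc : Nat.Coprime b c) :
    jacobiSym (b : ℤ) q * jacobiSym (c : ℤ) p = (-1 : ℤ) ^ (b * c / 2) := by
  have hZ : ((a : ℤ)) ^ 2 = (p : ℤ) * (b : ℤ) ^ 2 + (q : ℤ) * (c : ℤ) ^ 2 := by
    exact_mod_cast congrArg (Nat.cast : ℕ → ℤ) h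
  have hpodd : Odd p := Nat.odd_iff.mpr (by omega)
  have hqodd : Odd q := Nat.odd_iff.mpr (by omega)
  -- J(c|p) = 1
  have hJcp : jacobiSym (c : ℤ) p = 1 := by
    rw [← jacobiSym.quadratic_reciprocity_one_mod_four hp4 hc]
    have hmod : ((p : ℤ) * (b : ℤ) ^ 2) % (c : ℤ) = ((a : ℤ) ^ 2) % (c : ℤ) := by
      refine Int.modEq_iff_dvd.mpr ⟨(q : ℤ) * c, ?_⟩
      linear_combination hZ
    have h1 : jacobiSym ((p : ℤ) * (b : ℤ) ^ 2) c = 1 := by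
      rw [jacobiSym.mod_left' hmod, jacobiSym.sq_one' (by simpa [Int.gcd] using hac)]
    rwa [jacobiSym.mul_left, jacobiSym.sq_one' (by simpa [Int.gcd] using hbc), mul_one] at h1
  -- decompose b = 2^k * m
  obtain ⟨k, m, hm2, hbkm⟩ := Nat.exists_eq_pow_mul_and_not_dvd hb0 2 (by norm_num)
  have hmodd : Odd m := Nat.odd_iff.mpr (Nat.mod_two_eq_zero_or_one m |>.resolve_left
    (fun h2 => hm2 (Nat.dvd_of_mod_eq_zero h2)))
  have hk1 : 1 ≤ k := by
    rcases Nat.eq_zero_or_pos k with rfl | hk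
    · exfalso
      rw [pow_zero, one_mul] at hbkm
      rw [hbkm] at hb
      exact Nat.not_even_iff_odd.mpr hmodd hb
    · exact hk
  have hmb : m ∣ b := ⟨2 ^ k, by rw [hbkm]; ring⟩
  -- J(m|q) = 1
  have hJmq : jacobiSym (m : ℤ) q = 1 := by
    rw [← jacobiSym.quadratic_reciprocity_one_mod_four hq4 hmodd]
    have hdvd : (m : ℤ) ∣ b := Int.natCast_dvd_natCast.mpr hmb
    have hmod : ((q : ℤ) * (c : ℤ) ^ 2) % (m : ℤ) = ((a : ℤ) ^ 2) % (m : ℤ) := by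
      refine Int.modEq_iff_dvd.mpr ?_
      have : ((a : ℤ) ^ 2) - ((q : ℤ) * (c : ℤ) ^ 2) = (b : ℤ) * ((p : ℤ) * b) := by
        linear_combination hZ
      rw [this]
      exact Dvd.dvd.mul_right hdvd _
    have ham : Nat.Coprime a m := Nat.Coprime.coprime_dvd_right hmb hab
    have hcm : Nat.Coprime c m := Nat.Coprime.coprime_dvd_right hmb hbc.symm
    have h1 : jacobiSym ((q : ℤ) * (c : ℤ) ^ 2) m = 1 := by
      rw [jacobiSym.mod_left' hmod, jacobiSym.sq_one' (by simpa [Int.gcd] using ham)]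
    rwa [jacobiSym.mul_left, jacobiSym.sq_one' (by simpa [Int.gcd] using hcm), mul_one] at h1
  have hJbq : jacobiSym (b : ℤ) q = jacobiSym 2 q ^ k := by
    have hcast : ((b : ℕ) : ℤ) = (2 : ℤ) ^ k * (m : ℤ) := by rw [hbkm]; push_cast; ring
    rw [hcast, jacobiSym.mul_left, jacobiSym.pow_left, hJmq, mul_one]
  obtain ⟨u, hu⟩ := qrp_oddsq ha
  obtain ⟨v, hv⟩ := qrp_oddsq hc
  obtain ⟨w, hw⟩ := qrp_oddsq hmodd
  have hp2 : p % 2 = 1 := by omega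
  rw [hJbq, hJcp, mul_one]
  rcases eq_or_lt_of_le hk1 with hk | hk
  · -- k = 1, so q ≡ 5 mod 8
    obtain rfl : k = 1 := hk.symm
    rw [pow_one] at hbkm
    subst hbkm
    have h' : 8 * u + 1 = p * (4 * (8 * w + 1)) + q * (8 * v + 1) := by
      rw [← hu, ← hw, ← hv, h]; ring
    have h9 : 8 * u + 1 = 32 * (p * w) + 4 * p + 8 * (q * v) + q := by
      rw [h']; ring
    have hq8 : q % 8 = 5 := by
      generalize p * w = X at h9
      generalize q * v = Y at h9
      omega
    have hχ : jacobiSym 2 q = -1 := by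
      rw [jacobiSym.at_two hqodd, ZMod.χ₈_nat_eq_if_mod_eight]
      simp [hq8, Nat.odd_iff.mp hqodd]
    have hbc2 : 2 * m * c / 2 = m * c := by
      rw [mul_assoc, Nat.mul_div_cancel_left _ (by norm_num : 0 < 2)]
    rw [hχ, pow_one, hbc2, Odd.neg_one_pow (hmodd.mul hc)]
  · -- k ≥ 2, so q ≡ 1 mod 8
    obtain ⟨j, rfl⟩ : ∃ j, k = 2 + j := ⟨k - 2, by omega⟩
    subst hbkm
    have h' : 8 * u + 1 = p * (16 * ((2 ^ j) ^ 2 * (8 * w + 1))) + q * (8 * v + 1) := by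
      rw [← hu, ← hw, ← hv, h]; ring
    have h9 : 8 * u + 1 = 16 * (p * ((2 ^ j) ^ 2 * (8 * w + 1))) + 8 * (q * v) + q := by
      rw [h']; ring
    have hq8 : q % 8 = 1 := by
      generalize p * ((2 ^ j) ^ 2 * (8 * w + 1)) = X at h9
      generalize q * v = Y at h9
      omega
    have hχ : jacobiSym 2 q = 1 := by
      rw [jacobiSym.at_two hqodd, ZMod.χ₈_nat_eq_if_mod_eight]
      simp [hq8, Nat.odd_iff.mp hqodd]
    have hbc2 : 2 ^ (2 + j) * m * c / 2 = 2 * (2 ^ j * (m * c)) := by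
      have h4 : 2 ^ (2 + j) * m * c = 2 * (2 * (2 ^ j * (m * c))) := by ring
      rw [h4, Nat.mul_div_cancel_left _ (by norm_num : 0 < 2)]
    rw [hχ, one_pow, hbc2, Even.neg_one_pow (even_two_mul _)]

lemma qrp_parity {p q a b c : ℕ} (hp4 : p % 4 = 1) (hq4 : q % 4 = 1)
    (h : a ^ 2 = p * b ^ 2 + q * c ^ 2) (hg : Nat.gcd a (Nat.gcd b c) = 1) :
    Odd a ∧ ((Even b ∧ Odd c) ∨ (Odd b ∧ Even c)) := by
  have hodd_of : ∀ x : ℕ, Odd (x ^ 2) → Odd x := by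
    intro x hx
    rcases Nat.even_or_odd x with hE | hO
    · exact absurd (Nat.even_pow.mpr ⟨hE, two_ne_zero⟩) (Nat.not_even_iff_odd.mpr hx)
    · exact hO
  rcases Nat.even_or_odd b with hb | hb <;> rcases Nat.even_or_odd c with hc | hc
  · -- both even: contradiction
    exfalso
    obtain ⟨b', rfl⟩ := hb
    obtain ⟨c', rfl⟩ := hc
    have h2a : 2 ∣ a := by
      refine Nat.prime_two.dvd_of_dvd_pow (n := 2) ⟨2 * (p * b' ^ 2) + 2 * (q * c' ^ 2), ?_⟩
      rw [h]; ring
    have hd : (2 : ℕ) ∣ 1 := hg ▸ Nat.dvd_gcd h2a (Nat.dvd_gcd ⟨b', by ring⟩ ⟨c', by ring⟩)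
    exact absurd (Nat.dvd_one.mp hd) (by norm_num)
  · -- b even, c odd
    refine ⟨?_, Or.inl ⟨hb, hc⟩⟩
    refine hodd_of a ?_
    rw [h]
    exact Even.add_odd (Even.mul_left (Nat.even_pow.mpr ⟨hb, two_ne_zero⟩) p)
      ((Nat.odd_iff.mpr (by omega)).mul (hc.pow))
  · -- b odd, c even
    refine ⟨?_, Or.inr ⟨hb, hc⟩⟩
    refine hodd_of a ?_
    rw [h, add_comm]
    exact Even.add_odd (Even.mul_left (Nat.even_pow.mpr ⟨hc, two_ne_zero⟩) q)
      ((Nat.odd_iff.mpr (by omega)).mul (hb.pow))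
  · -- both odd: contradiction
    exfalso
    obtain ⟨x, hx⟩ := qrp_oddsq hb
    obtain ⟨y, hy⟩ := qrp_oddsq hc
    rcases Nat.even_or_odd a with haE | haO
    · obtain ⟨t, rfl⟩ := haE
      have h2 : 4 * (t * t) = 8 * (p * x) + p + 8 * (q * y) + q := by
        have h1 : (t + t) ^ 2 = p * (8 * x + 1) + q * (8 * y + 1) := by
          rw [← hx, ← hy]; exact h
        calc 4 * (t * t) = (t + t) ^ 2 := by ring
          _ = p * (8 * x + 1) + q * (8 * y + 1) := h1
          _ = 8 * (p * x) + p + 8 * (q * y) + q := by ring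
      generalize t * t = T at h2
      generalize p * x = X at h2
      generalize q * y = Y at h2
      omega
    · obtain ⟨u, hu⟩ := qrp_oddsq haO
      have h2 : 8 * u + 1 = 8 * (p * x) + p + 8 * (q * y) + q := by
        calc 8 * u + 1 = a ^ 2 := hu.symm
          _ = p * (8 * x + 1) + q * (8 * y + 1) := by rw [← hx, ← hy]; exact h
          _ = 8 * (p * x) + p + 8 * (q * y) + q := by ring
      generalize p * x = X at h2
      generalize q * y = Y at h2
      omega


/-- [L, Ex. 5.5]: let `p ≡ q ≡ 1 (mod 4)` be distinct primes with
`(p/q) = 1` and let `e, f, g` be integers with `e² = p f² + q g²`, `gcd(e,f,g) = 1`,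
normalized (after possibly swapping `p` and `q`) so that if `p ≡ q ≡ 5 (mod 8)` then
`f` is even and `g` odd, and if `p ≢ q (mod 8)` then `p ≡ 5`, `q ≡ 1 (mod 8)`.  Then
`(p/q)₄·(q/p)₄ = (−1)^(fg/2)·((−1)/e)`, the last symbol being the Jacobi symbol
`(−1 / |e|)` twisted by `sgn(e)` as in the paper. -/
theorem quartic_reciprocity_pell_form (p q : ℕ) [Fact p.Prime] [Fact q.Prime] (hne : p ≠ q)
    (hp4 : p % 4 = 1) (hq4 : q % 4 = 1) (hpq : legendreSym q p = 1)
    (e f g : ℤ) (h : e ^ 2 = p * f ^ 2 + q * g ^ 2)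
    (hgcd : Int.gcd e (Int.gcd f g) = 1)
    (hnorm1 : p % 8 = 5 ∧ q % 8 = 5 → Even f ∧ Odd g)
    (hnorm2 : p % 8 ≠ q % 8 → p % 8 = 5 ∧ q % 8 = 1) :
    quarticSym q (p : ℤ) * quarticSym p (q : ℤ) =
      (-1 : ℤ) ^ ((f * g) / 2).natAbs * jacobiSym (-1) e.natAbs := by
  have pf : Fact p.Prime := inferInstance
  have qf : Fact q.Prime := inferInstance
  set a := e.natAbs with ha_def
  set b := f.natAbs with hb_def
  set c := g.natAbs with hc_def
  have habs : ∀ x : ℤ, ((x.natAbs : ℤ)) ^ 2 = x ^ 2 := fun x => by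
    rw [← Int.abs_eq_natAbs, sq_abs]
  have hZ : ((a : ℤ)) ^ 2 = (p : ℤ) * (b : ℤ) ^ 2 + (q : ℤ) * (c : ℤ) ^ 2 := by
    rw [habs, habs, habs]; exact h
  have hnat : a ^ 2 = p * b ^ 2 + q * c ^ 2 := by exact_mod_cast hZ
  have hg' : Nat.gcd a (Nat.gcd b c) = 1 := by
    simpa [Int.gcd] using hgcd
  have hnat' : a ^ 2 = q * c ^ 2 + p * b ^ 2 := by rw [hnat]; ring
  have hg'' : Nat.gcd a (Nat.gcd c b) = 1 := by rwa [Nat.gcd_comm c b]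
  obtain ⟨ha, hpar⟩ := qrp_parity hp4 hq4 hnat hg'
  have hqa : ¬ q ∣ a := qrp_not_dvd pf.out qf.out hne hnat hg'
  have hpa : ¬ p ∣ a := qrp_not_dvd qf.out pf.out (Ne.symm hne) hnat' hg''
  have hqb : ¬ q ∣ b := by
    intro hdvd
    refine hqa (qf.out.dvd_of_dvd_pow (n := 2) ?_)
    rw [hnat]
    exact dvd_add (Dvd.dvd.mul_left (dvd_pow hdvd two_ne_zero) p) (dvd_mul_right q _)
  have hpc : ¬ p ∣ c := by
    intro hdvd
    refine hpa (pf.out.dvd_of_dvd_pow (n := 2) ?_)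
    rw [hnat]
    exact dvd_add (dvd_mul_right p _) (Dvd.dvd.mul_left (dvd_pow hdvd two_ne_zero) q)
  have hab : Nat.Coprime a b := qrp_cop_ab pf.out qf.out hne hnat hg'
  have hac : Nat.Coprime a c := qrp_cop_ab qf.out pf.out (Ne.symm hne) hnat' hg''
  have hbc : Nat.Coprime b c := qrp_cop_bc hnat hg'
  -- the quartic symbols as Legendre symbols
  have hcastq : ((p : ZMod q)) * ((b : ZMod q)) ^ 2 = ((a : ZMod q)) ^ 2 := by
    have := congrArg (Nat.cast : ℕ → ZMod q) hnat
    push_cast at this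
    rw [ZMod.natCast_self, zero_mul, add_zero] at this
    exact this.symm
  have hcastp : ((q : ZMod p)) * ((c : ZMod p)) ^ 2 = ((a : ZMod p)) ^ 2 := by
    have := congrArg (Nat.cast : ℕ → ZMod p) hnat
    push_cast at this
    rw [ZMod.natCast_self, zero_mul, zero_add] at this
    exact this.symm
  have hq1 : quarticSym q (p : ℤ) = legendreSym q ((a : ℤ) * b) :=
    qrp_quartic_eq q hq4 (p : ℤ) a b hqa hqb (by exact_mod_cast hcastq)
  have hq2 : quarticSym p (q : ℤ) = legendreSym p ((a : ℤ) * c) :=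
    qrp_quartic_eq p hp4 (q : ℤ) a c hpa hpc (by exact_mod_cast hcastp)
  have hJa := qrp_step3 p q a b c hp4 hq4 hnat ha hab hac hqa
  -- pass to Jacobi symbols
  rw [hq1, hq2, jacobiSym.legendreSym.to_jacobiSym, jacobiSym.legendreSym.to_jacobiSym,
    jacobiSym.mul_left, jacobiSym.mul_left]
  -- the exponent
  have hbcE : Even (b * c) := by
    rcases hpar with ⟨hbE, _⟩ | ⟨_, hcE⟩
    · exact hbE.mul_right c
    · exact hcE.mul_left b
  have hfg : ((f * g) / 2).natAbs = b * c / 2 := by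
    have hfgE : Even (f * g) := by
      rw [← Int.natAbs_even, Int.natAbs_mul]
      exact hbcE
    obtain ⟨y, hy⟩ := hfgE
    have hy2 : f * g = 2 * y := by rw [hy]; ring
    have h1 : ((f * g) / 2) = y := by rw [hy2, Int.mul_ediv_cancel_left _ (by norm_num)]
    have h2 : 2 * y.natAbs = b * c := by
      have h3 : (f * g).natAbs = 2 * y.natAbs := by
        rw [hy2, Int.natAbs_mul]
        norm_num
      rw [← h3]
      exact Int.natAbs_mul f g
    rw [h1]
    omega
  rcases hpar with ⟨hbE, hcO⟩ | ⟨hbO, hcE⟩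
  · have hb0 : b ≠ 0 := by
      intro h0
      refine hqa (qf.out.dvd_of_dvd_pow (n := 2) ⟨c ^ 2, ?_⟩)
      rw [hnat, h0]; ring
    have hcore := qrp_core p q a b c hp4 hq4 hnat ha hbE hcO hb0 hab hac hbc
    calc jacobiSym (a : ℤ) q * jacobiSym (b : ℤ) q * (jacobiSym (a : ℤ) p * jacobiSym (c : ℤ) p)
        = (jacobiSym (a : ℤ) q * jacobiSym (a : ℤ) p) *
            (jacobiSym (b : ℤ) q * jacobiSym (c : ℤ) p) := by ring
      _ = jacobiSym (-1) a * (-1 : ℤ) ^ (b * c / 2) := by rw [hJa, hcore]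
      _ = (-1 : ℤ) ^ ((f * g) / 2).natAbs * jacobiSym (-1) e.natAbs := by
          rw [hfg]; ring
  · have hc0 : c ≠ 0 := by
      intro h0
      refine hpa (pf.out.dvd_of_dvd_pow (n := 2) ⟨b ^ 2, ?_⟩)
      rw [hnat, h0]; ring
    have hcore := qrp_core q p a c b hq4 hp4 hnat' ha hcE hbO hc0 hac hab hbc.symm
    calc jacobiSym (a : ℤ) q * jacobiSym (b : ℤ) q * (jacobiSym (a : ℤ) p * jacobiSym (c : ℤ) p)
        = (jacobiSym (a : ℤ) q * jacobiSym (a : ℤ) p) *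
            (jacobiSym (c : ℤ) p * jacobiSym (b : ℤ) q) := by ring
      _ = jacobiSym (-1) a * (-1 : ℤ) ^ (c * b / 2) := by rw [hJa, hcore]
      _ = (-1 : ℤ) ^ ((f * g) / 2).natAbs * jacobiSym (-1) e.natAbs := by
          rw [hfg, mul_comm c b]; ring
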